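/- (Finitely many saturation points force discrete solutions.) Let m ∈ M(𝕋) and let η : 𝕋 → ℝ be continuous with ‖η‖_∞ ≤ 1 and ∫ η dm = ‖m‖_TV. Assume the saturation set S = { t ∈ 𝕋 : |η(t)| = 1 } is finite. Then m is a discrete measure supported in S: there exist real weights (β_τ)_{τ∈S} such that m = Σ_{τ∈S} β_τ·δ_τ, and for each τ ∈ S the sign of β_τ agrees with η(τ), i.e. β_τ·η(τ) ≥ 0. -/

import Mathlib

open MeasureTheory

/-- Total variation norm of a finite signed measure: `‖m‖_TV = m⁺(univ) + m⁻(univ)`. -/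
noncomputable def tvNorm {X : Type*} [MeasurableSpace X] (m : SignedMeasure X) : ℝ :=
  (m.totalVariation Set.univ).toReal

/-- Pairing of a function with a signed measure: `∫ η dm = ∫ η dm⁺ − ∫ η dm⁻`. -/
noncomputable def pairing {X : Type*} [MeasurableSpace X]
    (η : X → ℝ) (m : SignedMeasure X) : ℝ :=
  (∫ x, η x ∂m.toJordanDecomposition.posPart) - ∫ x, η x ∂m.toJordanDecomposition.negPart

/-- Supremum norm `‖η‖_∞ = sup_t |η t|`. -/
noncomputable def supNorm {X : Type*} (η : X → ℝ) : ℝ :=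
  sSup (Set.range fun t => |η t|)

/-- **finitely many saturation points force discrete solutions.**
Let `m ∈ M(𝕋)` and let `η : 𝕋 → ℝ` be continuous with `‖η‖_∞ ≤ 1` and
`∫ η dm = ‖m‖_TV`.  If the saturation set `S = { t : |η t| = 1 }` is finite, then `m` is
a discrete measure supported in `S`: `m = Σ_{τ∈S} β_τ·δ_τ` with `β_τ·η(τ) ≥ 0`. -/
theorem discrete_solution_of_finite_saturation (T : ℝ) [Fact (0 < T)]
    (m : SignedMeasure (AddCircle T)) (η : AddCircle T → ℝ) (hη : Continuous η)
    (hηnorm : supNorm η ≤ 1) (hcert : pairing η m = tvNorm m)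
    (hS : {t : AddCircle T | |η t| = 1}.Finite) :
    ∃ β : AddCircle T → ℝ,
      m = ∑ τ ∈ hS.toFinset, β τ • (Measure.dirac τ).toSignedMeasure
        ∧ ∀ τ ∈ hS.toFinset, 0 ≤ β τ * η τ := by
  classical
  set μp := m.toJordanDecomposition.posPart with hμp
  set μn := m.toJordanDecomposition.negPart with hμn
  -- pointwise bound
  have hbd : ∀ t, |η t| ≤ 1 := by
    intro t
    exact le_trans (le_csSup (isCompact_range hη.abs).bddAbove ⟨t, rfl⟩) hηnorm
  -- integrability
  have hintp : Integrable η μp :=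
    integrableOn_univ.mp (hη.continuousOn.integrableOn_compact isCompact_univ)
  have hintn : Integrable η μn :=
    integrableOn_univ.mp (hη.continuousOn.integrableOn_compact isCompact_univ)
  have h1p : Integrable (fun t => 1 - η t) μp := (integrable_const 1).sub hintp
  have h1n : Integrable (fun t => 1 + η t) μn := (integrable_const 1).add hintn
  -- the key vanishing integrals
  have htv : tvNorm m = (μp Set.univ).toReal + (μn Set.univ).toReal := by
    rw [tvNorm]
    have : m.totalVariation Set.univ = μp Set.univ + μn Set.univ :=
      Measure.add_apply _ _ _
    rw [this, ENNReal.toReal_add (measure_ne_top _ _) (measure_ne_top _ _)]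
  have key : (∫ t, (1 - η t) ∂μp) + (∫ t, (1 + η t) ∂μn) = 0 := by
    rw [integral_sub (integrable_const 1) hintp, integral_add (integrable_const 1) hintn,
      integral_const, integral_const]
    rw [pairing, htv] at hcert
    simp only [smul_eq_mul, mul_one]
    rw [← hμp, ← hμn] at hcert
    simp only [measureReal_def] at *
    linarith
  have hnnp : (0:ℝ) ≤ ∫ t, (1 - η t) ∂μp :=
    integral_nonneg fun t => by
      have := (abs_le.mp (hbd t)).2; show (0:ℝ) ≤ 1 - η t; linarith
  have hnnn : (0:ℝ) ≤ ∫ t, (1 + η t) ∂μn :=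
    integral_nonneg fun t => by
      have := (abs_le.mp (hbd t)).1; show (0:ℝ) ≤ 1 + η t; linarith
  have hzp : (∫ t, (1 - η t) ∂μp) = 0 := by linarith
  have hzn : (∫ t, (1 + η t) ∂μn) = 0 := by linarith
  -- support conditions
  have hp0 : μp {t | η t ≠ 1} = 0 := by
    have hae := (integral_eq_zero_iff_of_nonneg
      (fun t => by have := (abs_le.mp (hbd t)).2; simp; linarith) h1p).mp hzp
    rw [Filter.EventuallyEq, ae_iff] at hae
    refine measure_mono_null ?_ hae
    intro t ht
    simp only [Set.mem_setOf_eq, Pi.zero_apply] at *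
    intro h; exact ht (by linarith)
  have hn0 : μn {t | η t ≠ -1} = 0 := by
    have hae := (integral_eq_zero_iff_of_nonneg
      (fun t => by have := (abs_le.mp (hbd t)).1; simp; linarith) h1n).mp hzn
    rw [Filter.EventuallyEq, ae_iff] at hae
    refine measure_mono_null ?_ hae
    intro t ht
    simp only [Set.mem_setOf_eq, Pi.zero_apply] at *
    intro h; exact ht (by linarith)
  set F := hS.toFinset with hF
  -- decomposition of a supporting finite measure
  have hsplit : ∀ (μ : Measure (AddCircle T)), μ ((↑F : Set (AddCircle T))ᶜ) = 0 →
      ∀ A : Set (AddCircle T), MeasurableSet A → μ A = ∑ τ ∈ F, μ (A ∩ {τ}) := by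
    intro μ hnull A hA
    have hFm : MeasurableSet (↑F : Set (AddCircle T)) := F.finite_toSet.measurableSet
    rw [← measure_inter_add_diff A hFm]
    have h0 : μ (A \ ↑F) = 0 :=
      measure_mono_null (fun x hx => hx.2) hnull
    rw [h0, add_zero]
    have hU : A ∩ ↑F = ⋃ τ ∈ F, A ∩ {τ} := by
      ext x; simp [and_comm]
    rw [hU, measure_biUnion_finset ?_ (fun b _ => hA.inter (measurableSet_singleton b))]
    intro x _ y _ hxy
    simp only [Set.disjoint_left]
    rintro a ⟨_, ha⟩ ⟨_, hb⟩
    exact hxy (by rw [← Set.mem_singleton_iff.mp ha, Set.mem_singleton_iff.mp hb])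
  have hFsub : (↑F : Set (AddCircle T))ᶜ ⊆ {t | η t ≠ 1} := by
    intro t ht h1
    exact ht (by rw [hF, Set.Finite.coe_toFinset]; simp [h1])
  have hFsubn : (↑F : Set (AddCircle T))ᶜ ⊆ {t | η t ≠ -1} := by
    intro t ht h1
    exact ht (by rw [hF, Set.Finite.coe_toFinset]; simp [h1])
  have hpF : μp ((↑F : Set (AddCircle T))ᶜ) = 0 := measure_mono_null hFsub hp0
  have hnF : μn ((↑F : Set (AddCircle T))ᶜ) = 0 := measure_mono_null hFsubn hn0
  refine ⟨fun τ => (μp {τ}).toReal - (μn {τ}).toReal, ?_, ?_⟩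
  · -- measure equality
    refine VectorMeasure.ext fun A hA => ?_
    have hmA : m A = (μp A).toReal - (μn A).toReal := by
      conv_lhs => rw [← m.toSignedMeasure_toJordanDecomposition]
      have : m.toJordanDecomposition.toSignedMeasure =
          μp.toSignedMeasure - μn.toSignedMeasure := rfl
      rw [this, VectorMeasure.sub_apply, Measure.toSignedMeasure_apply_measurable hA,
        Measure.toSignedMeasure_apply_measurable hA]
      simp only [measureReal_def]
    have hsum : ∀ (s : Finset (AddCircle T)) (f : AddCircle T → SignedMeasure (AddCircle T)),
        (∑ i ∈ s, f i) A = ∑ i ∈ s, f i A := by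
      intro s f
      induction s using Finset.induction_on with
      | empty => simp
      | insert a s h ih =>
        rw [Finset.sum_insert h, Finset.sum_insert h, VectorMeasure.add_apply, ih]
    rw [hsum, hmA, hsplit μp hpF A hA, hsplit μn hnF A hA,
      ENNReal.toReal_sum (fun a _ => measure_ne_top _ _),
      ENNReal.toReal_sum (fun a _ => measure_ne_top _ _), ← Finset.sum_sub_distrib]
    refine Finset.sum_congr rfl fun τ _ => ?_
    rw [VectorMeasure.smul_apply, Measure.toSignedMeasure_apply_measurable hA,
      measureReal_def, Measure.dirac_apply' τ hA]
    by_cases hτ : τ ∈ A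
    · have : A ∩ {τ} = {τ} := by
        ext x; simp; rintro rfl; exact hτ
      rw [this]
      simp [Set.indicator_of_mem hτ]
    · have : A ∩ {τ} = ∅ := by
        ext x; simp; rintro hx rfl; exact hτ hx
      rw [this]
      simp [Set.indicator_of_notMem hτ]
  · -- sign condition
    intro τ hτ
    have hτS : |η τ| = 1 := by
      rw [hF, Set.Finite.mem_toFinset] at hτ; exact hτ
    rcases abs_eq (by norm_num : (0:ℝ) ≤ 1) |>.mp hτS with h1 | h1
    · have : μn {τ} = 0 := by
        refine measure_mono_null ?_ hn0
        intro x hx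
        simp only [Set.mem_singleton_iff] at hx
        subst hx; simp only [Set.mem_setOf_eq, h1]; norm_num
      have hb : (fun τ => (μp {τ}).toReal - (μn {τ}).toReal) τ = (μp {τ}).toReal := by
        simp [this]
      rw [hb, h1, mul_one]; exact ENNReal.toReal_nonneg
    · have : μp {τ} = 0 := by
        refine measure_mono_null ?_ hp0
        intro x hx
        simp only [Set.mem_singleton_iff] at hx
        subst hx; simp only [Set.mem_setOf_eq, h1]; norm_num
      have hb : (fun τ => (μp {τ}).toReal - (μn {τ}).toReal) τ = -(μn {τ}).toReal := by
        simp [this]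
      rw [hb, h1, neg_mul_neg, mul_one]; exact ENNReal.toReal_nonneg
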